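/- Let ψ : A → Set Λ be a semi-transition map on a commutative ring A, and suppose A is a pm-ring. Then the localization A_S, where S = {a ∈ A | ψ(a) = ∅}, is also a pm-ring. -/

import Mathlib

/-- A semi-transition map on a commutative ring `A` with values in subsets of a
nonempty set `Λ`. -/
structure IsSemiTransition {A : Type*} [CommRing A] {Λ : Type*} (ψ : A → Set Λ) : Prop where
  nonempty : Nonempty Λ
  map_mul : ∀ a b : A, ψ (a * b) = ψ a ∪ ψ b
  map_one : ψ 1 = ∅
  eq_univ_iff : ∀ a : A, ψ a = Set.univ ↔ a = 0
  inter_eq : ∀ a b : A, ∃ c ∈ Ideal.span {a, b}, ψ a ∩ ψ b = ψ c ∧ ψ c ⊆ ψ (a + b)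
  principal : ∀ a b : A, ψ a ∩ ψ b = ∅ →
    ∃ m n : ℕ, 0 < m ∧ 0 < n ∧ (Ideal.span {a ^ m, b ^ n} : Ideal A).IsPrincipal

/-- A pm-ring: every prime ideal is contained in a unique maximal ideal. -/
def IsPMRing (A : Type*) [CommRing A] : Prop :=
  ∀ P : Ideal A, P.IsPrime → ∃! M : Ideal A, M.IsMaximal ∧ P ≤ M

/-- Theorem: if `A` carries a semi-transition map `ψ` and `A` is a pm-ring, then the
localization of `A` at `S = {a | ψ a = ∅}` is also a pm-ring. -/
theorem localization_isPMRing {A : Type*} [CommRing A] {Λ : Type*}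
    (ψ : A → Set Λ) (hψ : IsSemiTransition ψ) (hpm : IsPMRing A)
    (S : Submonoid A) (hS : (S : Set A) = {a : A | ψ a = ∅}) :
    IsPMRing (Localization S) := by
  -- ψ of a positive power
  have hpow : ∀ (a : A) (m : ℕ), 0 < m → ψ (a ^ m) = ψ a := by
    intro a m hm
    induction m with
    | zero => exact absurd hm (lt_irrefl 0)
    | succ k ih =>
      rcases Nat.eq_zero_or_pos k with hk | hk
      · subst hk; simp
      · rw [pow_succ, hψ.map_mul, ih hk, Set.union_self]
  intro Q hQ
  haveI := hQ
  set L := Localization S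
  obtain ⟨M, hM, hQM⟩ := Q.exists_le_maximal hQ.ne_top
  refine ⟨M, ⟨hM, hQM⟩, ?_⟩
  rintro M' ⟨hM', hQM'⟩
  by_contra hne
  -- the comaps are primes of A
  haveI hMp : M.IsPrime := hM.isPrime
  haveI hM'p : M'.IsPrime := hM'.isPrime
  set f := algebraMap A L with hf
  set P : Ideal A := Q.comap f with hP
  set M₁ : Ideal A := M'.comap f with hM₁
  set M₂ : Ideal A := M.comap f with hM₂
  haveI hPp : P.IsPrime := Ideal.IsPrime.comap f
  haveI hM₁p : M₁.IsPrime := Ideal.IsPrime.comap f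
  haveI hM₂p : M₂.IsPrime := Ideal.IsPrime.comap f
  have hPM₁ : P ≤ M₁ := Ideal.comap_mono hQM'
  have hPM₂ : P ≤ M₂ := Ideal.comap_mono hQM
  -- the unique maximal ideal N of A over P contains both M₁ and M₂
  obtain ⟨N, ⟨hN, hPN⟩, hNuniq⟩ := hpm P hPp
  obtain ⟨N₁, hN₁, hM₁N₁⟩ := M₁.exists_le_maximal hM₁p.ne_top
  obtain ⟨N₂, hN₂, hM₂N₂⟩ := M₂.exists_le_maximal hM₂p.ne_top
  have hN₁N : N₁ = N := hNuniq N₁ ⟨hN₁, le_trans hPM₁ hM₁N₁⟩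
  have hN₂N : N₂ = N := hNuniq N₂ ⟨hN₂, le_trans hPM₂ hM₂N₂⟩
  have hM₁N : M₁ ≤ N := hN₁N ▸ hM₁N₁
  have hM₂N : M₂ ≤ N := hN₂N ▸ hM₂N₂
  -- M and M' are comaximal, so 1 = u + v with u ∈ M', v ∈ M
  have hcop : M' ⊔ M = ⊤ := Ideal.IsMaximal.coprime_of_ne hM' hM hne
  have h1 : (1 : L) ∈ M' ⊔ M := by rw [hcop]; trivial
  obtain ⟨u, hu, v, hv, huv⟩ := Submodule.mem_sup.mp h1
  -- write u, v as fractions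
  obtain ⟨⟨a₀, s⟩, hus⟩ := IsLocalization.mk'_surjective S u
  obtain ⟨⟨b₀, t⟩, hvt⟩ := IsLocalization.mk'_surjective S v
  have hus' : u * f s = f a₀ := by rw [← hus]; exact IsLocalization.mk'_spec L a₀ s
  have hvt' : v * f t = f b₀ := by rw [← hvt]; exact IsLocalization.mk'_spec L b₀ t
  have hkey : f (a₀ * t + b₀ * s) = f (s * t) := by
    rw [map_add, map_mul, map_mul, map_mul, ← hus', ← hvt']
    linear_combination (f ↑s * f ↑t) * huv
  obtain ⟨w, hw⟩ := IsLocalization.exists_of_eq (M := S) hkey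
  -- define a ∈ M₁, b ∈ M₂ with a + b ∈ S
  set a : A := (w : A) * (a₀ * t) with ha_def
  set b : A := (w : A) * (b₀ * s) with hb_def
  have hab : a + b = (w : A) * (s * t) := by
    rw [ha_def, hb_def, ← mul_add, hw]
  have habS : a + b ∈ S := by
    rw [hab]; exact S.mul_mem w.2 (S.mul_mem s.2 t.2)
  have haM₁ : a ∈ M₁ := by
    show f a ∈ M'
    have : f a = f w * (u * f s * f t) := by
      rw [ha_def, map_mul, map_mul, hus']
    rw [this]
    exact M'.mul_mem_left _ (M'.mul_mem_right _ (M'.mul_mem_right _ hu))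
  have hbM₂ : b ∈ M₂ := by
    show f b ∈ M
    have : f b = f w * (v * f t * f s) := by
      rw [hb_def, map_mul, map_mul, hvt']
    rw [this]
    exact M.mul_mem_left _ (M.mul_mem_right _ (M.mul_mem_right _ hv))
  -- ψ (a + b) = ∅
  have habψ : ψ (a + b) = ∅ := by
    have := habS
    rw [← SetLike.mem_coe, hS] at this
    exact this
  -- hence ψ a ∩ ψ b = ∅
  obtain ⟨c₁, _, hc₁, hc₁sub⟩ := hψ.inter_eq a b
  have hinter : ψ a ∩ ψ b = ∅ := by
    rw [hc₁]
    exact Set.eq_empty_of_subset_empty (habψ ▸ hc₁sub)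
  -- get a principal ideal (a^m, b^n) = (d)
  obtain ⟨m, n, hm, hn, hprin⟩ := hψ.principal a b hinter
  obtain ⟨d, hd⟩ := hprin.principal
  have hd' : Ideal.span {a ^ m, b ^ n} = Ideal.span {d} := hd
  -- d divides a^m and b^n
  have hamem : a ^ m ∈ Ideal.span ({d} : Set A) := by
    rw [← hd']
    exact Ideal.subset_span (by simp)
  have hbmem : b ^ n ∈ Ideal.span ({d} : Set A) := by
    rw [← hd']
    exact Ideal.subset_span (by simp)
  obtain ⟨a', ha'⟩ := Ideal.mem_span_singleton.mp hamem
  obtain ⟨b', hb'⟩ := Ideal.mem_span_singleton.mp hbmem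
  -- ψ d = ∅
  have hdψ : ψ d = ∅ := by
    have h1 : ψ d ⊆ ψ a := by
      have : ψ (a ^ m) = ψ d ∪ ψ a' := by rw [ha', hψ.map_mul]
      rw [hpow a m hm] at this
      rw [this]; exact Set.subset_union_left
    have h2 : ψ d ⊆ ψ b := by
      have : ψ (b ^ n) = ψ d ∪ ψ b' := by rw [hb', hψ.map_mul]
      rw [hpow b n hn] at this
      rw [this]; exact Set.subset_union_left
    exact Set.eq_empty_of_subset_empty (hinter ▸ Set.subset_inter h1 h2)
  have hdS : d ∈ S := by
    rw [← SetLike.mem_coe, hS]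
    exact hdψ
  -- d = x * a^m + y * b^n
  have hdmem : d ∈ Ideal.span ({a ^ m, b ^ n} : Set A) := by
    rw [hd']
    exact Ideal.mem_span_singleton_self d
  obtain ⟨x, y, hxy⟩ := Ideal.mem_span_pair.mp hdmem
  -- deduce x * a' + y * b' = 1
  have hzero : d * (x * a' + y * b' - 1) = 0 := by
    have : d * (x * a' + y * b') = x * a ^ m + y * b ^ n := by
      rw [ha', hb']; ring
    rw [mul_sub, this, hxy]; ring
  have hone : x * a' + y * b' = 1 := by
    have hψ0 : ψ ((0 : A)) = Set.univ := (hψ.eq_univ_iff 0).mpr rfl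
    have : ψ (d * (x * a' + y * b' - 1)) = Set.univ := by rw [hzero, hψ0]
    rw [hψ.map_mul, hdψ, Set.empty_union] at this
    exact sub_eq_zero.mp ((hψ.eq_univ_iff _).mp this)
  -- d is a unit in L
  have hdu : IsUnit (f d) := IsLocalization.map_units L ⟨d, hdS⟩
  obtain ⟨ud, hud⟩ := hdu
  -- a' ∈ M₁
  have ha'M₁ : a' ∈ M₁ := by
    show f a' ∈ M'
    have ham : f (a ^ m) ∈ M' := by
      rw [map_pow]
      exact Ideal.pow_mem_of_mem M' haM₁ m hm
    have : f a' = (↑ud⁻¹ : L) * f (a ^ m) := by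
      rw [ha', map_mul, ← hud]
      rw [← mul_assoc]
      rw [Units.inv_mul]
      ring
    rw [this]
    exact M'.mul_mem_left _ ham
  have hb'M₂ : b' ∈ M₂ := by
    show f b' ∈ M
    have hbm : f (b ^ n) ∈ M := by
      rw [map_pow]
      exact Ideal.pow_mem_of_mem M hbM₂ n hn
    have : f b' = (↑ud⁻¹ : L) * f (b ^ n) := by
      rw [hb', map_mul, ← hud]
      rw [← mul_assoc]
      rw [Units.inv_mul]
      ring
    rw [this]
    exact M.mul_mem_left _ hbm
  -- contradiction: 1 ∈ N
  have h1N : (1 : A) ∈ N := by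
    rw [← hone]
    exact N.add_mem (N.mul_mem_left x (hM₁N ha'M₁)) (N.mul_mem_left y (hM₂N hb'M₂))
  exact hN.ne_top ((Ideal.eq_top_iff_one N).mpr h1N)
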